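/- Let p_k^{(n)}, n≥k, be random variables where p_k^{(n)} has density proportional to f_k(x)·(x−x²)^{n−k} on (0,1), with f_k:(0,1)→[0,∞) integrable, ∫_0^1 f_k>0, and satisfying ∫_{1/2−ε}^{1/2+ε} f_k(x)dx > 0 for every ε>0. Then p_k^{(n)} → 1/2 in probability as n→∞ (indeed, P(|p_k^{(n)}−1/2| ≥ ε) decays geometrically in n). -/

import Mathlib

open MeasureTheory Set Filter

set_option maxHeartbeats 1000000 in
/-- Let `p_k⁽ⁿ⁾` (for `n ≥ k`) have density proportional to
`f_k(x) (x(1-x))^{n-k}` on `(0,1)`, where `f_k` is nonnegative and integrable with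
`∫₀¹ f_k > 0` and `∫_{1/2-ε}^{1/2+ε} f_k > 0` for every `ε > 0`. Then
`P(|p_k⁽ⁿ⁾ - 1/2| ≥ ε)` decays geometrically in `n` (so `p_k⁽ⁿ⁾ → 1/2` in probability):
for every `ε > 0` there are `C` and `q < 1` with
`∫_{|x-1/2| ≥ ε} f_k (x(1-x))^{n-k} / ∫₀¹ f_k (x(1-x))^{n-k} ≤ C qⁿ` for all `n ≥ k`. -/
theorem stmt_7 (k : ℕ) (f : ℝ → ℝ)
    (hf_nonneg : ∀ x ∈ Ioo (0 : ℝ) 1, 0 ≤ f x)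
    (hf_int : IntegrableOn f (Ioo (0 : ℝ) 1))
    (hf_pos : 0 < ∫ x in Ioo (0 : ℝ) 1, f x)
    (hf_center : ∀ ε > (0 : ℝ), 0 < ∫ x in Ioo (1 / 2 - ε) (1 / 2 + ε), f x) :
    ∀ ε > (0 : ℝ), ∃ C : ℝ, ∃ q : ℝ, 0 < q ∧ q < 1 ∧
      ∀ n : ℕ, k ≤ n →
        (∫ x in {x : ℝ | x ∈ Ioo (0 : ℝ) 1 ∧ ε ≤ |x - 1 / 2|},
            f x * (x * (1 - x)) ^ (n - k)) /
          (∫ x in Ioo (0 : ℝ) 1, f x * (x * (1 - x)) ^ (n - k)) ≤ C * q ^ n := by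
  intro ε hε
  set ε' : ℝ := min ε (1/4) with hε'def
  have hε'pos : 0 < ε' := lt_min hε (by norm_num)
  have hε'le : ε' ≤ 1/4 := min_le_right _ _
  have hε'leε : ε' ≤ ε := min_le_left _ _
  set a : ℝ := 1/4 - ε'^2 with ha_def
  set b : ℝ := 1/4 - (ε'/2)^2 with hb_def
  have ha : 0 < a := by rw [ha_def]; nlinarith [sq_nonneg ε']
  have hab : a < b := by rw [ha_def, hb_def]; nlinarith [sq_nonneg ε']
  have hb : 0 < b := ha.trans hab
  set J : ℝ := ∫ x in Ioo (1/2 - ε'/2) (1/2 + ε'/2), f x with hJ_def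
  have hJ : 0 < J := hf_center (ε'/2) (by positivity)
  set I : ℝ := ∫ x in Ioo (0:ℝ) 1, f x with hI_def
  -- central interval is inside (0,1)
  have hcent_sub : Ioo (1/2 - ε'/2) (1/2 + ε'/2) ⊆ Ioo (0:ℝ) 1 := by
    intro x hx
    simp only [mem_Ioo] at hx ⊢
    constructor <;> nlinarith [hx.1, hx.2]
  -- integrability of the weighted integrand
  have hg_int : ∀ m : ℕ, IntegrableOn (fun x => f x * (x*(1-x))^m) (Ioo (0:ℝ) 1) := by
    intro m
    have hmeas : AEStronglyMeasurable (fun x => f x * (x*(1-x))^m)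
        (volume.restrict (Ioo (0:ℝ) 1)) :=
      hf_int.aestronglyMeasurable.mul
        (((continuous_id.mul (continuous_const.sub continuous_id)).pow m).aestronglyMeasurable)
    refine Integrable.mono' (hf_int.norm.const_mul ((1/4:ℝ)^m)) hmeas ?_
    filter_upwards [ae_restrict_mem measurableSet_Ioo] with x hx
    have h1 : 0 ≤ x*(1-x) := by nlinarith [hx.1, hx.2]
    have h2 : x*(1-x) ≤ 1/4 := by nlinarith [sq_nonneg (x - 1/2)]
    have h3 : (x*(1-x))^m ≤ (1/4:ℝ)^m := pow_le_pow_left₀ h1 h2 m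
    rw [norm_mul, Real.norm_eq_abs ((x*(1-x))^m), abs_of_nonneg (pow_nonneg h1 m)]
    calc ‖f x‖ * (x*(1-x))^m ≤ ‖f x‖ * (1/4:ℝ)^m := by
          exact mul_le_mul_of_nonneg_left h3 (norm_nonneg _)
      _ = (1/4:ℝ)^m * ‖f x‖ := mul_comm _ _
  have hg_nonneg : ∀ m : ℕ, (0:ℝ → ℝ) ≤ᵐ[volume.restrict (Ioo (0:ℝ) 1)]
      (fun x => f x * (x*(1-x))^m) := by
    intro m
    filter_upwards [ae_restrict_mem measurableSet_Ioo] with x hx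
    have h1 : 0 ≤ x*(1-x) := by nlinarith [hx.1, hx.2]
    exact mul_nonneg (hf_nonneg x hx) (pow_nonneg h1 m)
  -- the bad set
  set S : Set ℝ := {x : ℝ | x ∈ Ioo (0:ℝ) 1 ∧ ε ≤ |x - 1/2|} with hS_def
  have hS_sub : S ⊆ Ioo (0:ℝ) 1 := fun x hx => hx.1
  have hS_meas : MeasurableSet S := by
    have : S = Ioo (0:ℝ) 1 ∩ {x : ℝ | ε ≤ |x - 1/2|} := rfl
    rw [this]
    exact measurableSet_Ioo.inter
      ((isClosed_le continuous_const ((continuous_id.sub continuous_const).abs)).measurableSet)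
  refine ⟨I / J * (b/a)^k, a/b, div_pos ha hb, (div_lt_one hb).2 hab, ?_⟩
  intro n hn
  set m : ℕ := n - k with hm_def
  -- numerator bound
  have hint_fS : IntegrableOn f S := hf_int.mono_set hS_sub
  have hnum1 : (∫ x in S, f x * (x*(1-x))^m) ≤ ∫ x in S, a^m * f x := by
    refine setIntegral_mono_on ((hg_int m).mono_set hS_sub) (hint_fS.const_mul _) hS_meas ?_
    intro x hx
    obtain ⟨hx01, hxe⟩ := hx
    have hfx : 0 ≤ f x := hf_nonneg x hx01
    have h1 : 0 ≤ x*(1-x) := by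
      have := hx01.1; have := hx01.2; nlinarith
    have hd : ε' ≤ |x - 1/2| := le_trans hε'leε hxe
    have h2 : x*(1-x) ≤ a := by
      have hsq : ε'^2 ≤ (x - 1/2)^2 := by
        have := sq_abs (x - 1/2)
        nlinarith [sq_nonneg (|x - 1/2| - ε')]
      rw [ha_def]; nlinarith
    have h3 : (x*(1-x))^m ≤ a^m := pow_le_pow_left₀ h1 h2 m
    calc f x * (x*(1-x))^m ≤ f x * a^m := mul_le_mul_of_nonneg_left h3 hfx
      _ = a^m * f x := mul_comm _ _
  have hnum2 : (∫ x in S, a^m * f x) ≤ a^m * I := by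
    rw [integral_const_mul]
    refine mul_le_mul_of_nonneg_left ?_ (pow_nonneg ha.le m)
    refine setIntegral_mono_set hf_int ?_ (HasSubset.Subset.eventuallyLE hS_sub)
    filter_upwards [ae_restrict_mem measurableSet_Ioo] with x hx using hf_nonneg x hx
  -- denominator bound
  have hden1 : b^m * J ≤ ∫ x in Ioo (1/2 - ε'/2) (1/2 + ε'/2), f x * (x*(1-x))^m := by
    rw [hJ_def, ← integral_const_mul]
    refine setIntegral_mono_on ((hf_int.mono_set hcent_sub).const_mul _)
      ((hg_int m).mono_set hcent_sub) measurableSet_Ioo ?_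
    intro x hx
    have hx01 := hcent_sub hx
    have hfx : 0 ≤ f x := hf_nonneg x hx01
    have hxb : b ≤ x*(1-x) := by
      simp only [mem_Ioo] at hx
      rw [hb_def]; nlinarith [hx.1, hx.2]
    have h3 : b^m ≤ (x*(1-x))^m := pow_le_pow_left₀ hb.le hxb m
    calc b^m * f x = f x * b^m := mul_comm _ _
      _ ≤ f x * (x*(1-x))^m := mul_le_mul_of_nonneg_left h3 hfx
  have hden2 : (∫ x in Ioo (1/2 - ε'/2) (1/2 + ε'/2), f x * (x*(1-x))^m)
      ≤ ∫ x in Ioo (0:ℝ) 1, f x * (x*(1-x))^m :=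
    setIntegral_mono_set (hg_int m) (hg_nonneg m)
      (HasSubset.Subset.eventuallyLE hcent_sub)
  have hden : b^m * J ≤ ∫ x in Ioo (0:ℝ) 1, f x * (x*(1-x))^m := hden1.trans hden2
  have hbJ : 0 < b^m * J := mul_pos (pow_pos hb m) hJ
  have hmain : (∫ x in S, f x * (x*(1-x))^m) / (∫ x in Ioo (0:ℝ) 1, f x * (x*(1-x))^m)
      ≤ (a^m * I) / (b^m * J) :=
    div_le_div₀ (mul_nonneg (pow_nonneg ha.le m) hf_pos.le) (hnum1.trans hnum2) hbJ hden
  refine hmain.trans (le_of_eq ?_)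
  have hnmk : n = m + k := (Nat.sub_add_cancel hn).symm
  rw [hnmk, pow_add]
  field_simp [ha.ne', hb.ne', hJ.ne']
  have e1 : b * (a / b) = a := by field_simp
  have e2 : (b / a) * (a / b) = 1 := by field_simp
  rw [show b ^ m * (b / a) ^ k * (a / b) ^ m * (a / b) ^ k
      = (b * (a / b)) ^ m * ((b / a) * (a / b)) ^ k by ring, e1, e2, one_pow, mul_one]
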